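/- Let α, β > −1 be real numbers and let k ≥ 1 be an integer. Define g(u) = (P̂_k^{(α,β)}(u))² + (1−u²)/(k(k+α+β+1)) · ((d/du) P̂_k^{(α,β)}(u))². Then g′(u) = 2((α+β+1)u + α − β)/(k(k+α+β+1)) · ((d/du) P̂_k^{(α,β)}(u))² for all u. In particular, if α ≥ 0 and α ≥ β, then g is nondecreasing on the interval [0, 1]. -/

import Mathlib

/-- Generalized binomial coefficient `C(a, j) = a(a-1)⋯(a-j+1)/j!` for real `a`. -/
noncomputable def genBinom (a : ℝ) (j : ℕ) : ℝ :=
  (∏ i ∈ Finset.range j, (a - i)) / (Nat.factorial j)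

/-- The Jacobi polynomial
`P_k^{(α,β)}(x) = Σ_{m=0}^k C(k+α, k-m)·C(k+β, m)·((x-1)/2)^m·((x+1)/2)^{k-m}`. -/
noncomputable def jacobiP (α β : ℝ) (k : ℕ) (x : ℝ) : ℝ :=
  ∑ m ∈ Finset.range (k + 1),
    genBinom ((k : ℝ) + α) (k - m) * genBinom ((k : ℝ) + β) m *
      ((x - 1) / 2) ^ m * ((x + 1) / 2) ^ (k - m)

/-- The normalized Jacobi polynomial `P̂_k^{(α,β)} = P_k^{(α,β)} / C(k+α, k)`,
so that `P̂_k^{(α,β)}(1) = 1`. -/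
noncomputable def jacobiPN (α β : ℝ) (k : ℕ) (x : ℝ) : ℝ :=
  jacobiP α β k x / genBinom ((k : ℝ) + α) k

/-! ### Auxiliary lemmas on generalized binomial coefficients -/

lemma descPoch_smeval (a : ℝ) (j : ℕ) :
    (descPochhammer ℤ j).smeval a = ∏ i ∈ Finset.range j, (a - i) := by
  induction j with
  | zero => simp [descPochhammer_zero]
  | succ n ih =>
      rw [descPochhammer_succ_right, Polynomial.smeval_mul, ih, Finset.prod_range_succ]
      congr 1
      simp [Polynomial.smeval_sub, Polynomial.smeval_X, Polynomial.smeval_natCast]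

lemma genBinom_eq_choose (a : ℝ) (j : ℕ) : genBinom a j = Ring.choose a j := by
  have h := Ring.descPochhammer_eq_factorial_smul_choose a j
  rw [descPoch_smeval] at h
  rw [genBinom, h, nsmul_eq_mul]
  field_simp

lemma genBinom_vandermonde (a b : ℝ) (n : ℕ) :
    genBinom (a + b) n = ∑ m ∈ Finset.range (n + 1), genBinom a m * genBinom b (n - m) := by
  rw [genBinom_eq_choose, Ring.add_choose_eq n (Commute.all a b),
    Finset.Nat.sum_antidiagonal_eq_sum_range_succ_mk]
  exact Finset.sum_congr rfl fun m _ => by rw [genBinom_eq_choose, genBinom_eq_choose]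

lemma genBinom_trinomial (a : ℝ) (p q : ℕ) :
    genBinom a p * genBinom (a - p) q = genBinom a (p + q) * Nat.choose (p + q) p := by
  have hprod : (∏ i ∈ Finset.range (p + q), (a - i)) =
      (∏ i ∈ Finset.range p, (a - i)) * ∏ i ∈ Finset.range q, (a - p - i) := by
    rw [Finset.prod_range_add]
    congr 1
    exact Finset.prod_congr rfl fun i _ => by push_cast; ring
  have hch : (Nat.choose (p + q) p : ℝ) = (p + q).factorial / (p.factorial * q.factorial) := by
    rw [Nat.choose_eq_factorial_div_factorial (Nat.le_add_right p q)]
    rw [Nat.add_sub_cancel_left, Nat.cast_div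
      (Nat.factorial_mul_factorial_dvd_factorial_add p q) (by positivity)]
    push_cast; ring
  simp only [genBinom, hprod, hch]
  have h1 : (p.factorial : ℝ) ≠ 0 := by positivity
  have h2 : (q.factorial : ℝ) ≠ 0 := by positivity
  have h3 : ((p+q).factorial : ℝ) ≠ 0 := by positivity
  field_simp

lemma genBinom_succ_right (a : ℝ) (j : ℕ) :
    genBinom a (j + 1) * (j + 1) = genBinom a j * (a - j) := by
  simp only [genBinom, Finset.prod_range_succ, Nat.factorial_succ]
  have h1 : (j.factorial : ℝ) ≠ 0 := by positivity
  have h2 : ((j:ℝ) + 1) ≠ 0 := by positivity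
  push_cast
  field_simp

lemma genBinom_succ_both (w : ℝ) (n : ℕ) :
    genBinom (w + 1) (n + 1) * (n + 1) = genBinom w n * (w + 1) := by
  simp only [genBinom, Nat.factorial_succ]
  have hp : (∏ i ∈ Finset.range (n+1), (w + 1 - i)) =
      (w + 1) * ∏ i ∈ Finset.range n, (w - i) := by
    rw [Finset.prod_range_succ']
    simp only [Nat.cast_zero, sub_zero, Nat.cast_add, Nat.cast_one]
    rw [mul_comm]
    congr 1
    exact Finset.prod_congr rfl fun i _ => by ring
  rw [hp]
  have h1 : (n.factorial : ℝ) ≠ 0 := by positivity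
  have h2 : ((n:ℝ) + 1) ≠ 0 := by positivity
  push_cast
  field_simp

lemma triangle_sum (k : ℕ) (f : ℕ → ℕ → ℝ) :
    ∑ m ∈ Finset.range (k+1), ∑ j ∈ Finset.range (k+1-m), f m j
      = ∑ n ∈ Finset.range (k+1), ∑ m ∈ Finset.range (n+1), f m (n-m) := by
  rw [Finset.sum_sigma', Finset.sum_sigma']
  refine Finset.sum_nbij' (fun p => ⟨p.1 + p.2, p.1⟩) (fun p => ⟨p.2, p.1 - p.2⟩) ?_ ?_ ?_ ?_ ?_
  · rintro ⟨m, j⟩ h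
    simp only [Finset.mem_sigma, Finset.mem_range] at h ⊢
    omega
  · rintro ⟨n, m⟩ h
    simp only [Finset.mem_sigma, Finset.mem_range] at h ⊢
    omega
  · rintro ⟨m, j⟩ h; simp
  · rintro ⟨n, m⟩ h
    simp only [Finset.mem_sigma, Finset.mem_range] at h
    simp only [Sigma.mk.inj_iff]
    exact ⟨by omega, heq_of_eq (by omega)⟩
  · rintro ⟨m, j⟩ h
    simp only [Finset.mem_sigma, Finset.mem_range] at h
    simp [Nat.add_sub_cancel_left]

/-! ### The Jacobi polynomial as a polynomial in `t = (x-1)/2` -/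

/-- coefficient of `t^n` in the expansion of the Jacobi polynomial in `t = (x-1)/2` -/
noncomputable def jc (α β : ℝ) (k n : ℕ) : ℝ :=
  if n ≤ k then genBinom ((k:ℝ) + α) (k - n) * genBinom ((k:ℝ) + α + β + n) n else 0

/-- the Jacobi polynomial in the variable `t = (x-1)/2` -/
noncomputable def jR (α β : ℝ) (k : ℕ) : Polynomial ℝ :=
  ∑ n ∈ Finset.range (k + 1), Polynomial.C (jc α β k n) * Polynomial.X ^ n

lemma jR_coeff (α β : ℝ) (k n : ℕ) : (jR α β k).coeff n = jc α β k n := by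
  rw [jR, Polynomial.finset_sum_coeff]
  simp only [Polynomial.coeff_C_mul, Polynomial.coeff_X_pow, mul_ite, mul_one, mul_zero]
  rw [Finset.sum_ite_eq (Finset.range (k+1)) n (jc α β k)]
  by_cases h : n ≤ k
  · simp [Finset.mem_range, Nat.lt_succ_iff, h]
  · simp only [Finset.mem_range, Nat.lt_succ_iff, h, if_false]
    simp [jc, h]

lemma jc_rec (α β : ℝ) (k n : ℕ) :
    ((n:ℝ) + 1) * ((n:ℝ) + α + 1) * jc α β k (n + 1)
      = ((k:ℝ) - n) * ((k:ℝ) + n + α + β + 1) * jc α β k n := by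
  rcases lt_trichotomy n k with h | h | h
  · have hk1 : n + 1 ≤ k := h
    have hkn : n ≤ k := le_of_lt h
    rw [jc, jc, if_pos hk1, if_pos hkn]
    have e1 : k - n = (k - (n+1)) + 1 := by omega
    have h1 := genBinom_succ_right ((k:ℝ) + α) (k - (n+1))
    have h2 := genBinom_succ_both ((k:ℝ) + α + β + n) n
    have ec : ((k - (n+1) : ℕ) : ℝ) = (k:ℝ) - n - 1 := by
      rw [Nat.cast_sub hk1]; push_cast; ring
    rw [ec] at h1
    rw [e1]
    push_cast at h1 h2 ⊢
    rw [show (k:ℝ) + α + β + ((n:ℝ)+1) = ((k:ℝ) + α + β + (n:ℝ)) + 1 from by ring]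
    linear_combination (-(genBinom ((k:ℝ) + α + β + (n:ℝ) + 1) (n+1) * ((n:ℝ)+1))) * h1
      + (genBinom ((k:ℝ) + α) (k-(n+1)+1) * ((k:ℝ)-(n:ℝ))) * h2
  · subst h
    rw [jc, jc, if_neg (by omega), if_pos le_rfl]
    simp
  · rw [jc, jc, if_neg (by omega), if_neg (by omega)]
    simp

open Polynomial in
/-- abstract ODE: a polynomial whose coefficients satisfy the Jacobi recurrence
satisfies the (translated) Jacobi differential equation -/
lemma polyODE (α β kr : ℝ) (S : Polynomial ℝ) (c : ℕ → ℝ) (hc : ∀ n, S.coeff n = c n)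
    (hrec : ∀ n : ℕ, ((n:ℝ) + 1) * ((n:ℝ) + α + 1) * c (n + 1)
      = (kr - n) * (kr + n + α + β + 1) * c n) :
    (X ^ 2 + X) * derivative (derivative S)
      + (C (α + 1) + C (α + β + 2) * X) * derivative S
      = C (kr * (kr + α + β + 1)) * S := by
  ext n
  rw [coeff_C_mul]
  simp only [add_mul, coeff_add, mul_assoc]
  rw [coeff_C_mul, coeff_C_mul]
  match n with
  | 0 =>
    rw [mul_coeff_zero, mul_coeff_zero, mul_coeff_zero]
    simp only [coeff_X_zero, coeff_X_pow, zero_mul, coeff_derivative, hc]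
    have h := hrec 0
    push_cast at h ⊢
    norm_num
    linear_combination h
  | 1 =>
    rw [coeff_X_pow_mul' _ 2 1, if_neg (by norm_num)]
    have e2 := coeff_X_mul (derivative (derivative S)) 0
    have e3 := coeff_X_mul (derivative S) 0
    rw [zero_add] at e2 e3
    rw [e2, e3]
    simp only [coeff_derivative, hc]
    have h1 := hrec 1
    push_cast at h1 ⊢
    linear_combination h1
  | (n+2) =>
    have e1 : ((X:ℝ[X])^2 * derivative (derivative S)).coeff (n+2)
        = (derivative (derivative S)).coeff n := by
      simpa using coeff_X_pow_mul (derivative (derivative S)) 2 n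
    have e2 := coeff_X_mul (derivative (derivative S)) (n+1)
    have e3 := coeff_X_mul (derivative S) (n+1)
    rw [e1, show n+2 = (n+1)+1 from rfl, e2, e3]
    simp only [coeff_derivative, hc]
    have h2 := hrec (n+2)
    push_cast at h2 ⊢
    linear_combination h2

lemma key_sum (α β : ℝ) (k n : ℕ) (hn : n ≤ k) :
    ∑ m ∈ Finset.range (n+1),
      genBinom ((k:ℝ)+α) (k-m) * genBinom ((k:ℝ)+β) m * (Nat.choose (k-m) (n-m))
    = genBinom ((k:ℝ)+α) (k-n) * genBinom ((k:ℝ)+α+β+n) n := by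
  have step : ∀ m ∈ Finset.range (n+1),
      genBinom ((k:ℝ)+α) (k-m) * genBinom ((k:ℝ)+β) m * (Nat.choose (k-m) (n-m))
      = genBinom ((k:ℝ)+α) (k-n) *
          (genBinom ((k:ℝ)+β) m * genBinom (((k:ℝ)+α) - ((k:ℝ)-n)) (n-m)) := by
    intro m hm
    rw [Finset.mem_range, Nat.lt_succ_iff] at hm
    have h1 : (k - n) + (n - m) = k - m := by omega
    have h2 : Nat.choose (k-m) (k-n) = Nat.choose (k-m) (n-m) := by
      rw [← Nat.choose_symm (by omega : k - n ≤ k - m)]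
      congr 1
      omega
    have h3 := genBinom_trinomial ((k:ℝ)+α) (k-n) (n-m)
    rw [h1, h2] at h3
    have hc : (((k-n:ℕ)):ℝ) = (k:ℝ) - n := by
      rw [Nat.cast_sub hn]
    rw [hc] at h3
    linear_combination (genBinom ((k:ℝ)+β) m) * h3.symm
  rw [Finset.sum_congr rfl step, ← Finset.mul_sum]
  congr 1
  rw [← genBinom_vandermonde ((k:ℝ)+β) (((k:ℝ)+α) - ((k:ℝ)-n)) n]
  congr 1
  ring

lemma jacobiP_eq_eval (α β : ℝ) (k : ℕ) (x : ℝ) :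
    jacobiP α β k x = (jR α β k).eval ((x-1)/2) := by
  have hx1 : (x+1)/2 = (x-1)/2 + 1 := by ring
  set t := (x-1)/2 with ht
  rw [jacobiP]
  have step1 : ∀ m ∈ Finset.range (k+1),
      genBinom ((k:ℝ)+α) (k-m) * genBinom ((k:ℝ)+β) m * t^m * ((x+1)/2)^(k-m)
      = ∑ j ∈ Finset.range (k+1-m),
          (genBinom ((k:ℝ)+α) (k-m) * genBinom ((k:ℝ)+β) m * (Nat.choose (k-m) j)) * t^(m+j) := by
    intro m hm
    rw [Finset.mem_range, Nat.lt_succ_iff] at hm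
    rw [hx1, add_pow, show k+1-m = (k-m)+1 by omega, Finset.mul_sum]
    refine Finset.sum_congr rfl fun j hj => ?_
    rw [pow_add]
    ring
  rw [Finset.sum_congr rfl step1, triangle_sum k
    (fun m j => (genBinom ((k:ℝ)+α) (k-m) * genBinom ((k:ℝ)+β) m * (Nat.choose (k-m) j)) * t^(m+j))]
  rw [jR, Polynomial.eval_finset_sum]
  refine Finset.sum_congr rfl fun n hn => ?_
  rw [Finset.mem_range, Nat.lt_succ_iff] at hn
  simp only [Polynomial.eval_mul, Polynomial.eval_C, Polynomial.eval_pow, Polynomial.eval_X]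
  have hstep : ∀ m ∈ Finset.range (n+1),
      (genBinom ((k:ℝ)+α) (k-m) * genBinom ((k:ℝ)+β) m * (Nat.choose (k-m) (n-m))) * t^(m+(n-m))
      = (genBinom ((k:ℝ)+α) (k-m) * genBinom ((k:ℝ)+β) m * (Nat.choose (k-m) (n-m))) * t^n := by
    intro m hm
    rw [Finset.mem_range, Nat.lt_succ_iff] at hm
    rw [show m + (n-m) = n by omega]
  rw [Finset.sum_congr rfl hstep, ← Finset.sum_mul, key_sum α β k n hn, jc, if_pos hn]

theorem jacobi_g_derivative_and_monotone
    (α β : ℝ) (hα : -1 < α) (hβ : -1 < β) (k : ℕ) (hk : 1 ≤ k)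
    (g : ℝ → ℝ)
    (hg : g = fun u => (jacobiPN α β k u) ^ 2 +
      (1 - u ^ 2) / ((k : ℝ) * ((k : ℝ) + α + β + 1)) *
        (deriv (jacobiPN α β k) u) ^ 2) :
    (∀ u : ℝ, deriv g u =
        2 * ((α + β + 1) * u + α - β) / ((k : ℝ) * ((k : ℝ) + α + β + 1)) *
          (deriv (jacobiPN α β k) u) ^ 2) ∧
      (0 ≤ α → β ≤ α → MonotoneOn g (Set.Icc (0 : ℝ) 1)) := by
  classical
  set kr : ℝ := (k : ℝ) with hkr
  have hk1 : (1:ℝ) ≤ kr := by rw [hkr]; exact_mod_cast hk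
  set K : ℝ := kr * (kr + α + β + 1) with hK
  have hKpos : 0 < K := by
    apply mul_pos (by linarith)
    linarith
  have hKne : K ≠ 0 := ne_of_gt hKpos
  -- the normalization constant is nonzero
  set N : ℝ := genBinom (kr + α) k with hNdef
  have hNpos : 0 < N := by
    rw [hNdef, genBinom]
    apply div_pos
    · apply Finset.prod_pos
      intro i hi
      rw [Finset.mem_range] at hi
      have : (i:ℝ) ≤ kr - 1 := by
        have : (i:ℝ) + 1 ≤ (k:ℝ) := by exact_mod_cast hi
        linarith [this]
      linarith
    · positivity
  have hNne : N ≠ 0 := ne_of_gt hNpos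
  -- the normalized Jacobi polynomial as polynomial evaluation
  set SN : Polynomial ℝ := Polynomial.C N⁻¹ * jR α β k with hSN
  have hcN : ∀ n, SN.coeff n = N⁻¹ * jc α β k n := by
    intro n
    rw [hSN, Polynomial.coeff_C_mul, jR_coeff]
  have hrecN : ∀ n : ℕ, ((n:ℝ) + 1) * ((n:ℝ) + α + 1) * (N⁻¹ * jc α β k (n + 1))
      = (kr - n) * (kr + n + α + β + 1) * (N⁻¹ * jc α β k n) := by
    intro n
    have := jc_rec α β k n
    linear_combination N⁻¹ * this
  have hODE := polyODE α β kr SN (fun n => N⁻¹ * jc α β k n) hcN hrecN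
  have hPN : jacobiPN α β k = fun u => SN.eval ((u-1)/2) := by
    funext u
    rw [jacobiPN, jacobiP_eq_eval, hSN]
    rw [Polynomial.eval_mul, Polynomial.eval_C]
    rw [div_eq_mul_inv, mul_comm]
  -- derivatives
  have hlin : ∀ u : ℝ, HasDerivAt (fun u : ℝ => (u-1)/2) (1/2) u := by
    intro u
    simpa using ((hasDerivAt_id u).sub_const 1).div_const 2
  have hA : ∀ u : ℝ, HasDerivAt (fun u : ℝ => SN.eval ((u-1)/2))
      ((Polynomial.derivative SN).eval ((u-1)/2) * (1/2)) u := by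
    intro u
    exact HasDerivAt.comp u (SN.hasDerivAt _) (hlin u)
  have hd : ∀ u : ℝ, deriv (jacobiPN α β k) u
      = (Polynomial.derivative SN).eval ((u-1)/2) * (1/2) := by
    intro u
    rw [hPN]
    exact (hA u).deriv
  have hB : ∀ u : ℝ, HasDerivAt
      (fun u : ℝ => (Polynomial.derivative SN).eval ((u-1)/2) * (1/2))
      ((Polynomial.derivative (Polynomial.derivative SN)).eval ((u-1)/2) * (1/2) * (1/2)) u := by
    intro u
    exact (HasDerivAt.comp u ((Polynomial.derivative SN).hasDerivAt _) (hlin u)).mul_const (1/2)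
  have hg' : g = fun u => (SN.eval ((u-1)/2))^2 +
      (1 - u^2)/K * ((Polynomial.derivative SN).eval ((u-1)/2) * (1/2))^2 := by
    rw [hg]
    funext u
    rw [hd u, hPN]
  -- derivative of g
  have hgd : ∀ u : ℝ, HasDerivAt g
      ((2 * (SN.eval ((u-1)/2))^1 * ((Polynomial.derivative SN).eval ((u-1)/2) * (1/2)))
        + ((-(2*u^1))/K * (((Polynomial.derivative SN).eval ((u-1)/2) * (1/2)))^2
          + (1 - u^2)/K * (2 * (((Polynomial.derivative SN).eval ((u-1)/2) * (1/2)))^1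
            * ((Polynomial.derivative (Polynomial.derivative SN)).eval ((u-1)/2) * (1/2) * (1/2))))) u := by
    intro u
    rw [hg']
    exact ((hA u).pow 2).add
      ((((hasDerivAt_pow 2 u).const_sub 1).div_const K).mul ((hB u).pow 2))
  -- the evaluated differential equation
  have hODEeval : ∀ u : ℝ,
      (((u-1)/2)^2 + ((u-1)/2)) * (Polynomial.derivative (Polynomial.derivative SN)).eval ((u-1)/2)
        + ((α+1) + (α+β+2) * ((u-1)/2)) * (Polynomial.derivative SN).eval ((u-1)/2)
        = K * SN.eval ((u-1)/2) := by
    intro u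
    have h := congrArg (Polynomial.eval ((u-1)/2)) hODE
    simpa [Polynomial.eval_add, Polynomial.eval_mul, Polynomial.eval_pow] using h
  -- main derivative formula
  have hmain : ∀ u : ℝ, deriv g u =
      2 * ((α + β + 1) * u + α - β) / K *
        (deriv (jacobiPN α β k) u) ^ 2 := by
    intro u
    rw [(hgd u).deriv, hd u]
    set A := SN.eval ((u-1)/2)
    set B := (Polynomial.derivative SN).eval ((u-1)/2)
    set D := (Polynomial.derivative (Polynomial.derivative SN)).eval ((u-1)/2)
    have h2 : (1 - u^2) * (D/4) + (β - α - (α+β+2)*u) * (B/2) + K * A = 0 := by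
      linear_combination (-1 : ℝ) * hODEeval u
    have h4 : (1-u^2)/K * (2 * (B * (1/2))^1 * (D * (1/2) * (1/2)))
        = (B/K) * ((1-u^2) * (D/4)) := by ring
    have h5 : (1-u^2)*(D/4) = -((β - α - (α+β+2)*u) * (B/2)) - K * A := by linarith
    rw [h4, h5]
    field_simp
    ring
  constructor
  · exact hmain
  · intro hα0 hβα
    have hdiff : Differentiable ℝ g := fun u => (hgd u).differentiableAt
    apply monotoneOn_of_deriv_nonneg (convex_Icc 0 1) hdiff.continuous.continuousOn
      (hdiff.differentiableOn)
    intro x hx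
    rw [interior_Icc, Set.mem_Ioo] at hx
    rw [hmain x]
    apply mul_nonneg
    · apply div_nonneg _ (le_of_lt hKpos)
      have : 0 ≤ (α + β + 1) * x := by
        apply mul_nonneg (by linarith) (le_of_lt hx.1)
      linarith
    · positivity
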